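/- For a binary memoryless source with P_X(0) = p and Hamming distortion, with distortion level 0 < D < min(p, 1-p), the D-tilted information density is ȷ(x, D | P_X) = log(1/P_X(x)) - h(D), where h is the binary entropy function; consequently its variance under P_X equals p(1-p)·log²((1-p)/p), which does not depend on D. -/

import Mathlib

open Real Finset

/-- For a binary memoryless source with P(0) = p and Hamming distortion, with
0 < D < min(p, 1-p), the D-tilted information density (computed with the
optimal output distribution Q(0) = (p-D)/(1-2D) and tilt s* = log((1-D)/D))
equals log(1/P(x)) - h(D); consequently its variance under P equals
p(1-p)·log²((1-p)/p), independently of D. -/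
theorem binary_hamming_tilted_information_density
    (p D : ℝ) (hp : 0 < p) (hp1 : p < 1) (hD : 0 < D) (hDm : D < min p (1 - p)) :
    let P : Fin 2 → ℝ := fun x => if x = 0 then p else 1 - p
    let Q : Fin 2 → ℝ := fun y => if y = 0 then (p - D) / (1 - 2 * D)
                                  else 1 - (p - D) / (1 - 2 * D)
    let dH : Fin 2 → Fin 2 → ℝ := fun x y => if x = y then 0 else 1
    let s : ℝ := Real.log ((1 - D) / D)
    let h : ℝ → ℝ := fun t => -(t * Real.log t + (1 - t) * Real.log (1 - t))
    let j : Fin 2 → ℝ := fun x => Real.log (1 / P x) - h D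
    (∀ x : Fin 2,
      - Real.log (∑ y, Q y * Real.exp (-s * (dH x y - D))) = j x) ∧
    (∑ x, P x * (j x - ∑ x', P x' * j x') ^ 2
      = p * (1 - p) * (Real.log ((1 - p) / p)) ^ 2) := by
  intro P Q dH s h j
  have hDp : D < p := lt_of_lt_of_le hDm (min_le_left _ _)
  have hD1p : D < 1 - p := lt_of_lt_of_le hDm (min_le_right _ _)
  have h1D : 0 < 1 - D := by linarith
  have h2D : 0 < 1 - 2 * D := by linarith
  have hexps : Real.exp s = (1 - D) / D := Real.exp_log (by positivity)
  have hexpns : Real.exp (-s) = D / (1 - D) := by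
    rw [Real.exp_neg, hexps]; field_simp
  have hs : s = Real.log (1 - D) - Real.log D := Real.log_div (by linarith) hD.ne'
  have e1 : Real.exp (-(s * (1 - D))) = Real.exp (s * D) * (D / (1 - D)) := by
    rw [show -(s * (1 - D)) = s * D + (-s) by ring, Real.exp_add, hexpns]
  have hlp : Real.log (1 / p) = -Real.log p := by rw [one_div, Real.log_inv]
  have hl1p : Real.log (1 / (1 - p)) = -Real.log (1 - p) := by
    rw [one_div, Real.log_inv]
  constructor
  · intro x
    fin_cases x
    · show - Real.log (∑ y, Q y * Real.exp (-s * (dH 0 y - D))) = j 0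
      have hsum : (∑ y, Q y * Real.exp (-s * (dH 0 y - D)))
          = Real.exp (s * D) * (p / (1 - D)) := by
        simp only [Fin.sum_univ_two, Q, dH]
        norm_num
        rw [e1]
        field_simp [h2D.ne', show (1:ℝ) - D * 2 ≠ 0 by linarith]
        ring
      rw [hsum, Real.log_mul (Real.exp_ne_zero _) (by positivity), Real.log_exp,
        Real.log_div hp.ne' h1D.ne']
      simp only [j, P, h]
      norm_num [Real.log_inv]
      rw [hs]
      ring
    · show - Real.log (∑ y, Q y * Real.exp (-s * (dH 1 y - D))) = j 1
      have hsum : (∑ y, Q y * Real.exp (-s * (dH 1 y - D)))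
          = Real.exp (s * D) * ((1 - p) / (1 - D)) := by
        simp only [Fin.sum_univ_two, Q, dH]
        norm_num
        rw [e1]
        field_simp [h2D.ne', show (1:ℝ) - D * 2 ≠ 0 by linarith]
        ring
      rw [hsum, Real.log_mul (Real.exp_ne_zero _) (div_pos (by linarith) h1D).ne',
        Real.log_exp, Real.log_div (by linarith : (1:ℝ) - p ≠ 0) h1D.ne']
      simp only [j, P, h]
      norm_num
      rw [hs]
      ring
  · simp only [Fin.sum_univ_two, j, P]
    norm_num
    rw [Real.log_div (by linarith : (1:ℝ) - p ≠ 0) hp.ne']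
    ring
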